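/- Let n, N, K be positive integers and B_N > 0. Let y_1, …, y_N ∈ ℂ^n satisfy the Bessel bound Σ_{j=1}^N |⟨x, y_j⟩|² ≤ B_N·‖x‖² for all x ∈ ℂ^n, and let z_1, …, z_K ∈ ℂ^n be arbitrary. Then the pointwise products x_{j,k} := y_j ⊙ z_k form a Bessel sequence for ℂ^n with Bessel bound K·B_N·(max_{1 ≤ k ≤ K} ‖z_k‖_∞²); that is, for every x ∈ ℂ^n, Σ_{j=1}^N Σ_{k=1}^K |⟨x, x_{j,k}⟩|² ≤ K·B_N·(max_{1 ≤ k ≤ K} ‖z_k‖_∞²)·‖x‖². -/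

import Mathlib

/-- The Bessel-bound claim from the proof of the multiplicative frame
construction theorem: if `y₁, …, y_N ∈ ℂⁿ` is a Bessel sequence with Bessel
bound `B_N` and `z₁, …, z_K ∈ ℂⁿ` are arbitrary, then the pointwise products
`X j k = y j ⊙ z k` form a Bessel sequence with Bessel bound
`K · B_N · (max_k ‖z k‖_∞²)`. -/
theorem multiplicative_bessel_bound
    (n N K : ℕ) (hn : 0 < n) (hN : 0 < N) (hK : 0 < K)
    (BN : ℝ) (hBN : 0 < BN)
    (y : Fin N → EuclideanSpace ℂ (Fin n))
    (z : Fin K → EuclideanSpace ℂ (Fin n))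
    (hbessel : ∀ x : EuclideanSpace ℂ (Fin n),
      ∑ j, ‖(inner ℂ x (y j) : ℂ)‖ ^ 2 ≤ BN * ‖x‖ ^ 2)
    (X : Fin N → Fin K → EuclideanSpace ℂ (Fin n))
    (hX : ∀ j k i, X j k i = y j i * z k i) :
    ∀ x : EuclideanSpace ℂ (Fin n),
      ∑ j, ∑ k, ‖(inner ℂ x (X j k) : ℂ)‖ ^ 2 ≤
        (K : ℝ) * BN * (⨆ k : Fin K, (⨆ i : Fin n, ‖z k i‖) ^ 2) * ‖x‖ ^ 2 := by
  intro x
  haveI : NeZero n := ⟨hn.ne'⟩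
  haveI : NeZero K := ⟨hK.ne'⟩
  set M : ℝ := ⨆ k : Fin K, (⨆ i : Fin n, ‖z k i‖) ^ 2 with hMdef
  have hbdd : BddAbove (Set.range fun k : Fin K => (⨆ i : Fin n, ‖z k i‖) ^ 2) :=
    (Set.finite_range _).bddAbove
  have hMle : ∀ k : Fin K, (⨆ i : Fin n, ‖z k i‖) ^ 2 ≤ M := fun k => le_ciSup hbdd k
  have hMnn : 0 ≤ M := le_trans (sq_nonneg _) (hMle ⟨0, hK⟩)
  -- the auxiliary vectors
  set w : Fin K → EuclideanSpace ℂ (Fin n) :=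
    fun k => WithLp.toLp 2 (fun i => x i * (starRingEnd ℂ) (z k i)) with hwdef
  have hinner : ∀ j k, (inner ℂ x (X j k) : ℂ) = (inner ℂ (w k) (y j) : ℂ) := by
    intro j k
    simp only [PiLp.inner_apply, RCLike.inner_apply, hwdef, PiLp.toLp_apply, hX, map_mul,
      RingHomCompTriple.comp_apply, starRingEnd_self_apply]
    exact Finset.sum_congr rfl fun i _ => by simp only [RingHom.id_apply]; ring
  have hwnorm : ∀ k, ‖w k‖ ^ 2 ≤ M * ‖x‖ ^ 2 := by
    intro k
    have hxn : ‖x‖ ^ 2 = ∑ i, ‖x i‖ ^ 2 := by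
      rw [EuclideanSpace.norm_eq, Real.sq_sqrt]
      exact Finset.sum_nonneg fun i _ => sq_nonneg _
    have hwn : ‖w k‖ ^ 2 = ∑ i, ‖x i * (starRingEnd ℂ) (z k i)‖ ^ 2 := by
      rw [EuclideanSpace.norm_eq, Real.sq_sqrt]
      exact Finset.sum_nonneg fun i _ => sq_nonneg _
    rw [hwn, hxn, Finset.mul_sum]
    refine Finset.sum_le_sum fun i _ => ?_
    have hzi : ‖z k i‖ ≤ ⨆ i, ‖z k i‖ := le_ciSup (f := fun i => ‖z k i‖) (Set.finite_range _).bddAbove i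
    have h1 : ‖x i * (starRingEnd ℂ) (z k i)‖ ^ 2 = ‖x i‖ ^ 2 * ‖z k i‖ ^ 2 := by
      rw [norm_mul, mul_pow, RCLike.norm_conj]
    rw [h1]
    calc ‖x i‖ ^ 2 * ‖z k i‖ ^ 2 ≤ ‖x i‖ ^ 2 * (⨆ i, ‖z k i‖) ^ 2 := by
          exact mul_le_mul_of_nonneg_left (pow_le_pow_left₀ (norm_nonneg _) hzi 2)
            (sq_nonneg _)
      _ ≤ ‖x i‖ ^ 2 * M := mul_le_mul_of_nonneg_left (hMle k) (sq_nonneg _)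
      _ = M * ‖x i‖ ^ 2 := mul_comm _ _
  calc ∑ j, ∑ k, ‖(inner ℂ x (X j k) : ℂ)‖ ^ 2
      = ∑ k, ∑ j, ‖(inner ℂ (w k) (y j) : ℂ)‖ ^ 2 := by
        rw [Finset.sum_comm]
        exact Finset.sum_congr rfl fun k _ => Finset.sum_congr rfl fun j _ => by
          rw [hinner]
    _ ≤ ∑ k : Fin K, BN * (M * ‖x‖ ^ 2) := by
        refine Finset.sum_le_sum fun k _ => ?_
        calc ∑ j, ‖(inner ℂ (w k) (y j) : ℂ)‖ ^ 2 ≤ BN * ‖w k‖ ^ 2 := hbessel (w k)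
          _ ≤ BN * (M * ‖x‖ ^ 2) := mul_le_mul_of_nonneg_left (hwnorm k) hBN.le
    _ = (K : ℝ) * BN * M * ‖x‖ ^ 2 := by
        rw [Finset.sum_const, Finset.card_univ, Fintype.card_fin, nsmul_eq_mul]
        ring
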